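/- The rule-based drastic inconsistency measure I^RB_d does not satisfy Rule Emphasis: there exists a rule base B and a rule r = (B'→H) not in B and not free in B ∪ {r} such that I^RB_d(B ∪ {r}) is not strictly greater than I^RB_d(B ∪ {H}). -/

import Mathlib

open scoped Classical

/-- A rule over atoms `A`: literals are pairs (atom, sign). -/
structure Rule (A : Type*) where
  body : Finset (A × Bool)
  head : A × Bool
deriving DecidableEq

abbrev RuleBase (A : Type*) := Finset (Rule A)

variable {A : Type*}

/-- The complement of a literal. -/
def litCompl (l : A × Bool) : A × Bool := (l.1, !l.2)

/-- The fact with head `l` (empty body). -/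
def factR (l : A × Bool) : Rule A := ⟨∅, l⟩

/-- The facts (empty-body rules) of a rule base. -/
noncomputable def facts [DecidableEq A] (B : RuleBase A) : RuleBase A :=
  B.filter (fun r => r.body = ∅)

/-- The proper (non-fact) rules of a rule base. -/
noncomputable def properRules [DecidableEq A] (B : RuleBase A) : RuleBase A :=
  B.filter (fun r => r.body ≠ ∅)

/-- A set of literals is closed w.r.t. a rule base. -/
def Closed (B : RuleBase A) (M : Set (A × Bool)) : Prop :=
  ∀ r ∈ B, (↑r.body ⊆ M) → r.head ∈ M

/-- The minimal model: the smallest closed set of literals. -/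
def minModel (B : RuleBase A) : Set (A × Bool) :=
  {l | ∀ M : Set (A × Bool), Closed B M → l ∈ M}

/-- A set of literals is consistent if it contains no complementary pair. -/
def ConsistentLits (M : Set (A × Bool)) : Prop :=
  ¬ ∃ a : A, (a, true) ∈ M ∧ (a, false) ∈ M

/-- A rule base is consistent if its minimal model is consistent. -/
def Consistent (B : RuleBase A) : Prop := ConsistentLits (minModel B)

/-- The minimal inconsistent subsets of a rule base. -/
def MI (B : RuleBase A) : Set (RuleBase A) :=
  { M | M ⊆ B ∧ ¬ Consistent M ∧ ∀ M' ⊂ M, Consistent M' }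

/-- `M` contains a complementary pair of facts. -/
def hasComplFactPair (M : RuleBase A) : Prop :=
  ∃ a : A, factR (a, true) ∈ M ∧ factR (a, false) ∈ M

/-- Minimal inconsistent subsets containing no complementary pair of facts. -/
def MIF (B : RuleBase A) : Set (RuleBase A) :=
  { M ∈ MI B | ¬ hasComplFactPair M }

/-- A formula is free in a rule base if it belongs to no minimal inconsistent subset. -/
def Free (r : Rule A) (B : RuleBase A) : Prop := ∀ M ∈ MI B, r ∉ M

/-- Rule consistency: the rules together with any consistent set of facts are consistent. -/
def RuleConsistent [DecidableEq A] (B : RuleBase A) : Prop :=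
  ∀ F' ⊆ facts B, Consistent F' → Consistent (properRules B ∪ F')

/-- The drastic inconsistency measure. -/
noncomputable def Idr (B : RuleBase A) : ℕ := if Consistent B then 0 else 1

/-- The rule-based drastic inconsistency measure. -/
noncomputable def IRBd (B : RuleBase A) : ℕ := if MIF B = ∅ then 0 else 1

/-- The rule-based MI-inconsistency measure. -/
noncomputable def IRBMI (B : RuleBase A) : ℕ := (MIF B).ncard

/-- The rule-based problematic inconsistency measure: number of distinct
    non-fact rules occurring in some element of `MIF B`. -/
noncomputable def IRBp (B : RuleBase A) : ℕ :=
  {r : Rule A | r.body ≠ ∅ ∧ ∃ M ∈ MIF B, r ∈ M}.ncard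

/-- Three truth values. -/
inductive TV | t | b | f
deriving DecidableEq

def TV.negv : TV → TV
  | .t => .f
  | .f => .t
  | .b => .b

/-- Value of a literal under a three-valued interpretation. -/
def litVal (v : A → TV) (l : A × Bool) : TV :=
  if l.2 then v l.1 else (v l.1).negv

/-- Designated truth values. -/
def TV.des : TV → Prop
  | .f => False
  | _ => True

/-- Three-valued satisfaction of a rule. -/
def sat3 (v : A → TV) (r : Rule A) : Prop :=
  (∀ l ∈ r.body, (litVal v l).des) → (litVal v r.head).des

/-- The rule-based contension inconsistency measure. -/
noncomputable def IRBc (B : RuleBase A) : ℕ :=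
  sInf { n : ℕ | ∃ v : A → TV,
    (∀ M ∈ MIF B, ∀ r ∈ M, sat3 v r) ∧ n = {a : A | v a = TV.b}.ncard }

/-- The payoff of `α` in coalition `C` (w.r.t. rule base `B` and measure `I`). -/
noncomputable def CoalPayoff [DecidableEq A] (I : RuleBase A → ℝ) (B : RuleBase A)
    (α : Rule A) (C : RuleBase A) : ℝ :=
  ((Nat.factorial (C.card - 1) * Nat.factorial (B.card - C.card) : ℕ) : ℝ)
    / ((Nat.factorial B.card : ℕ) : ℝ) * (I C - I (C.erase α))

/-- The additional payoff shifted from facts to non-free rules. -/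
noncomputable def AddPayoff [DecidableEq A] (I : RuleBase A → ℝ) (B : RuleBase A)
    (r : Rule A) (C : RuleBase A) : ℝ :=
  if Free r C then 0
  else (∑ f ∈ C.filter (fun x => x.body = ∅), CoalPayoff I B f C)
        / ((C.filter (fun x => x.body ≠ ∅ ∧ ¬ Free x C)).card : ℝ)

/-- The adjusted Shapley inconsistency value. -/
noncomputable def Sstar [DecidableEq A] (I : RuleBase A → ℝ) (B : RuleBase A)
    (α : Rule A) : ℝ :=
  if α.body = ∅ then 0
  else ∑ C ∈ B.powerset, (CoalPayoff I B α C + AddPayoff I B α C)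

lemma consistent_of_closed {A : Type*} (B : RuleBase A) (M0 : Set (A × Bool))
    (hc : Closed B M0) (hcons : ConsistentLits M0) : Consistent B := by
  rintro ⟨a, h1, h2⟩
  exact hcons ⟨a, h1 M0 hc, h2 M0 hc⟩

lemma incons_gadget {B : RuleBase ℕ} {a : ℕ} (h1 : factR (a, true) ∈ B)
    (h2 : (⟨{(a, true)}, (a, false)⟩ : Rule ℕ) ∈ B) : ¬ Consistent B := by
  intro hc
  have hla : ∀ M : Set (ℕ × Bool), Closed B M → (a, true) ∈ M := by
    intro M hM
    exact hM _ h1 (by simp [factR])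
  exact hc ⟨a, fun M hM => hla M hM, fun M hM => by
    refine hM _ h2 ?_
    intro x hx
    simp at hx
    subst hx
    exact hla M hM⟩

lemma min_gadget (a : ℕ) :
    ∀ M' ⊂ ({factR (a, true), (⟨{(a, true)}, (a, false)⟩ : Rule ℕ)} : RuleBase ℕ),
      Consistent M' := by
  intro M' hss
  rcases Finset.exists_of_ssubset hss with ⟨x, hxM, hxM'⟩
  have hsub := hss.subset
  simp only [Finset.mem_insert, Finset.mem_singleton] at hxM
  rcases hxM with rfl | rfl
  · apply consistent_of_closed M' ∅
    · intro s hs hb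
      have := hsub hs
      simp only [Finset.mem_insert, Finset.mem_singleton] at this
      rcases this with rfl | rfl
      · exact absurd hs hxM'
      · exfalso
        have h : ((a, true) : ℕ × Bool) ∈ (∅ : Set (ℕ × Bool)) := hb (by simp)
        simp at h
    · rintro ⟨b, h1, -⟩; exact h1
  · apply consistent_of_closed M' {(a, true)}
    · intro s hs hb
      have := hsub hs
      simp only [Finset.mem_insert, Finset.mem_singleton] at this
      rcases this with rfl | rfl
      · simp [factR]
      · exact absurd hs hxM'
    · rintro ⟨b, h1, h2⟩
      simp at h2

lemma mi_gadget {B : RuleBase ℕ} {a : ℕ} (h1 : factR (a, true) ∈ B)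
    (h2 : (⟨{(a, true)}, (a, false)⟩ : Rule ℕ) ∈ B) :
    ({factR (a, true), (⟨{(a, true)}, (a, false)⟩ : Rule ℕ)} : RuleBase ℕ) ∈ MI B := by
  refine ⟨?_, ?_, min_gadget a⟩
  · intro x hx
    simp only [Finset.mem_insert, Finset.mem_singleton] at hx
    rcases hx with rfl | rfl <;> assumption
  · exact incons_gadget (a := a) (by simp) (by simp)

theorem stmt5 :
    ∃ (B : RuleBase ℕ) (r : Rule ℕ),
      r.body ≠ ∅ ∧ r ∉ B ∧ ¬ Free r (insert r B) ∧
      ¬ (IRBd (insert r B) > IRBd (insert (factR r.head) B)) := by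
  refine ⟨{factR ((0:ℕ), true), (⟨{((0:ℕ), true)}, (0, false)⟩ : Rule ℕ), factR ((1:ℕ), true)},
    (⟨{((1:ℕ), true)}, (1, false)⟩ : Rule ℕ), ?_, ?_, ?_, ?_⟩
  · decide
  · decide
  · intro hfree
    exact hfree _ (mi_gadget (a := 1) (by simp) (by simp)) (by simp)
  · have h1 : IRBd (insert (factR (⟨{((1:ℕ), true)}, (1, false)⟩ : Rule ℕ).head)
        {factR ((0:ℕ), true), (⟨{((0:ℕ), true)}, (0, false)⟩ : Rule ℕ), factR ((1:ℕ), true)}) = 1 := by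
      have hmem : ({factR ((0:ℕ), true), (⟨{((0:ℕ), true)}, (0, false)⟩ : Rule ℕ)} : RuleBase ℕ) ∈
          MIF (insert (factR (⟨{((1:ℕ), true)}, (1, false)⟩ : Rule ℕ).head)
            {factR ((0:ℕ), true), (⟨{((0:ℕ), true)}, (0, false)⟩ : Rule ℕ), factR ((1:ℕ), true)}) := by
        refine ⟨mi_gadget (a := 0) (by simp) (by simp), ?_⟩
        rintro ⟨b, hb1, hb2⟩
        simp only [Finset.mem_insert, Finset.mem_singleton] at hb2
        rcases hb2 with h | h
        · simp [factR, Rule.mk.injEq] at h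
        · simp [factR, Rule.mk.injEq] at h
      rw [IRBd, if_neg]
      intro h
      rw [Set.eq_empty_iff_forall_notMem] at h
      exact h _ hmem
    rw [h1]
    rw [IRBd]
    split <;> omega
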